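/- Suppose |Cov(x_k, x_l)| ≤ C|k−l|^{−τ} for all k ≠ l with τ > 1.5 and Var(x_k) ≤ C, and suppose the coefficients satisfy |φ_{ij}| ≤ C((log j + 1)/j)^{τ−1} for all j ≥ 1. Then E|Σ_{j=b+1}^{i−1} φ_{ij} x_{i−j}|² ≤ C' ((log b)^{τ−1} b^{−(τ−1.5)})² for some constant C' depending only on C and τ, uniformly in i and n. -/

import Mathlib

open MeasureTheory Finset

lemma tail_rpow_sum_le {a : ℝ} (ha : 1 < a) (b N : ℕ) (hb : 1 ≤ b) :
    ∑ j ∈ Finset.Icc (b + 1) N, (j : ℝ) ^ (-a) ≤ (b : ℝ) ^ (1 - a) / (a - 1) := by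
  have hb0 : (0:ℝ) < b := by exact_mod_cast hb
  rcases le_or_gt (b+1) N with hN | hN
  · have hbN : b ≤ N := by omega
    have hanti : AntitoneOn (fun t : ℝ => t ^ (-a)) (Set.Icc (b:ℝ) (N:ℝ)) := by
      intro u hu v hv huv
      exact Real.rpow_le_rpow_of_nonpos (lt_of_lt_of_le hb0 hu.1) huv (by linarith)
    have key := hanti.sum_le_integral_Ico (by exact_mod_cast hbN)
    have him : Finset.Icc (b+1) N = Finset.image (· + 1) (Finset.Ico b N) := by
      rw [Finset.image_add_right_Ico]
      rfl
    have hsum : ∑ j ∈ Finset.Icc (b + 1) N, (j : ℝ) ^ (-a)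
        = ∑ i ∈ Finset.Ico b N, ((i:ℝ) + 1) ^ (-a) := by
      rw [him, Finset.sum_image (by intro u _ v _ h; simp only at h; omega)]
      push_cast
      simp [add_comm]
    have hint : ∫ t in (b:ℝ)..(N:ℝ), t ^ (-a)
        = ((N:ℝ) ^ (-a + 1) - (b:ℝ) ^ (-a + 1)) / (-a + 1) := by
      apply integral_rpow
      right
      constructor
      · intro h; linarith
      · rw [Set.uIcc_of_le (by exact_mod_cast hbN)]
        intro h
        exact absurd h.1 (by push_neg; exact hb0)
    have hNpos : (0:ℝ) ≤ (N:ℝ) ^ (-a+1) := Real.rpow_nonneg (by positivity) _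
    calc ∑ j ∈ Finset.Icc (b + 1) N, (j : ℝ) ^ (-a)
        = ∑ i ∈ Finset.Ico b N, ((i:ℝ) + 1) ^ (-a) := hsum
      _ ≤ ∫ t in (b:ℝ)..(N:ℝ), t ^ (-a) := by
          convert key using 2 with i
          push_cast; ring_nf
      _ = ((N:ℝ) ^ (-a + 1) - (b:ℝ) ^ (-a + 1)) / (-a + 1) := hint
      _ = ((b:ℝ) ^ (-a + 1) - (N:ℝ) ^ (-a + 1)) / (a - 1) := by
          rw [div_eq_div_iff (by linarith) (by linarith)]; ring
      _ ≤ (b:ℝ) ^ (1 - a) / (a - 1) := by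
          rw [show (1:ℝ) - a = -a + 1 by ring]
          gcongr
          · linarith
  · rw [Finset.Icc_eq_empty (by omega)]
    simp only [Finset.sum_empty]
    exact div_nonneg (Real.rpow_nonneg hb0.le _) (by linarith)

lemma add_rpow_le' {A B s : ℝ} (hA : 0 ≤ A) (hB : 0 ≤ B) (hs : 0 ≤ s) :
    (A + B) ^ s ≤ 2 ^ s * (A ^ s + B ^ s) := by
  have h1 : A + B ≤ 2 * max A B := by
    rcases le_total A B with h | h
    · rw [max_eq_right h]; linarith
    · rw [max_eq_left h]; linarith
  calc (A + B) ^ s ≤ (2 * max A B) ^ s :=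
        Real.rpow_le_rpow (by positivity) h1 hs
    _ = 2 ^ s * (max A B) ^ s := Real.mul_rpow (by norm_num) (le_max_iff.mpr (Or.inl hA))
    _ ≤ 2 ^ s * (A ^ s + B ^ s) := by
        gcongr 2 ^ s * ?_
        rcases le_total A B with h | h
        · rw [max_eq_right h]
          exact le_add_of_nonneg_left (Real.rpow_nonneg hA _)
        · rw [max_eq_left h]
          exact le_add_of_nonneg_right (Real.rpow_nonneg hB _)

lemma coeff_tail_sum {s : ℝ} (hs : 1 < s) :
    ∃ K : ℝ, 0 < K ∧ ∀ b N : ℕ, 2 ≤ b →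
      ∑ j ∈ Finset.Icc (b + 1) N, ((Real.log j + 1) / j) ^ s ≤
        K * ((Real.log b) ^ s * (b : ℝ) ^ (1 - s)) := by
  set δ : ℝ := (s - 1) / (2 * s) with hδdef
  have hs0 : 0 < s := by linarith
  have hδ0 : 0 < δ := div_pos (by linarith) (by linarith)
  have hδ1 : δ < 1 := by
    rw [hδdef, div_lt_one (by positivity)]; linarith
  have ha2 : (1 - δ) * s = (s + 1) / 2 := by
    rw [hδdef]; field_simp; ring
  have ha2gt : 1 < (1 - δ) * s := by rw [ha2]; linarith
  have hl2 : (0:ℝ) < Real.log 2 := Real.log_pos (by norm_num)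
  set c₁ : ℝ := 1 + 1 / Real.log 2 with hc₁
  have hc₁0 : 0 < c₁ := by positivity
  have hpows : (0:ℝ) < 2 ^ s := Real.rpow_pos_of_pos (by norm_num) s
  have hpowc : (0:ℝ) < c₁ ^ s := Real.rpow_pos_of_pos hc₁0 s
  have hpowd : (0:ℝ) < δ⁻¹ ^ s := Real.rpow_pos_of_pos (inv_pos.mpr hδ0) s
  have hpowl : (0:ℝ) < (Real.log 2)⁻¹ ^ s := Real.rpow_pos_of_pos (inv_pos.mpr hl2) s
  refine ⟨2 ^ s * c₁ ^ s / (s - 1) + 2 ^ s * δ⁻¹ ^ s * (Real.log 2)⁻¹ ^ s / ((1 - δ) * s - 1),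
    by
      have h1 : (0:ℝ) < 2 ^ s * c₁ ^ s / (s - 1) :=
        div_pos (mul_pos hpows hpowc) (by linarith)
      have h2 : (0:ℝ) < 2 ^ s * δ⁻¹ ^ s * (Real.log 2)⁻¹ ^ s / ((1 - δ) * s - 1) :=
        div_pos (mul_pos (mul_pos hpows hpowd) hpowl) (by linarith)
      linarith, ?_⟩
  intro b N hb
  have hb0 : (0:ℝ) < b := by positivity
  have hb2 : (2:ℝ) ≤ b := by exact_mod_cast hb
  have hLb : Real.log 2 ≤ Real.log b := Real.log_le_log (by norm_num) hb2
  have hLb0 : 0 < Real.log b := lt_of_lt_of_le hl2 hLb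
  set L : ℝ := Real.log b with hL
  -- termwise bound
  have hterm : ∀ j ∈ Finset.Icc (b + 1) N,
      ((Real.log j + 1) / j) ^ s ≤
        2 ^ s * ((L + 1) ^ s * (j:ℝ) ^ (-s)) +
        2 ^ s * (δ⁻¹ ^ s * ((b:ℝ) ^ (-δ)) ^ s * (j:ℝ) ^ (-((1 - δ) * s))) := by
    intro j hj
    rw [Finset.mem_Icc] at hj
    have hjb : b + 1 ≤ j := hj.1
    have hj0 : (0:ℝ) < j := by
      have : (0:ℕ) < j := by omega
      exact_mod_cast this
    have hjb' : (b:ℝ) ≤ (j:ℝ) := by exact_mod_cast (by omega : b ≤ j)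
    have hj1 : (1:ℝ) ≤ (j:ℝ) := by linarith
    have hlogj0 : 0 ≤ Real.log j := Real.log_nonneg hj1
    -- log j + 1 ≤ (L+1) + δ⁻¹ * (j/b)^δ
    have hquot : (1:ℝ) ≤ (j:ℝ) / b := (one_le_div hb0).mpr hjb'
    have hlogsplit : Real.log j = L + Real.log ((j:ℝ) / b) := by
      rw [Real.log_div (by positivity) (by positivity)]; ring
    have hlogpow : Real.log ((j:ℝ) / b) ≤ δ⁻¹ * ((j:ℝ) / b) ^ δ := by
      have h1 : δ * Real.log ((j:ℝ)/b) = Real.log (((j:ℝ)/b) ^ δ) :=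
        (Real.log_rpow (by positivity) δ).symm
      have h2 : Real.log (((j:ℝ)/b) ^ δ) ≤ ((j:ℝ)/b) ^ δ - 1 :=
        Real.log_le_sub_one_of_pos (by positivity)
      have h3 : δ * Real.log ((j:ℝ)/b) ≤ ((j:ℝ)/b) ^ δ := by
        rw [h1]; linarith
      rw [← mul_le_mul_iff_right₀ hδ0, ← mul_assoc, mul_inv_cancel₀ hδ0.ne', one_mul]
      exact h3
    have hAB : (Real.log j + 1) / j ≤ (L + 1) / j + δ⁻¹ * (b:ℝ) ^ (-δ) * (j:ℝ) ^ (δ - 1) := by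
      have hd : ((j:ℝ)/b) ^ δ = (j:ℝ) ^ δ * (b:ℝ) ^ (-δ) := by
        rw [Real.div_rpow (by positivity) hb0.le, Real.rpow_neg hb0.le, div_eq_mul_inv]
      have hjd : (j:ℝ) ^ δ / j = (j:ℝ) ^ (δ - 1) := by
        rw [Real.rpow_sub hj0, Real.rpow_one]
      have hnum : Real.log j + 1 ≤ (L + 1) + δ⁻¹ * ((j:ℝ)/b) ^ δ := by
        rw [hlogsplit]; linarith
      have hstep : (Real.log j + 1) / j ≤ ((L + 1) + δ⁻¹ * ((j:ℝ)/b) ^ δ) / j := by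
        gcongr
      refine hstep.trans ?_
      rw [add_div]
      gcongr 
      rw [hd, mul_div_assoc, mul_assoc, mul_comm ((j:ℝ)^δ) _, mul_div_assoc, hjd]
    have hApos : 0 ≤ (L + 1) / j := by positivity
    have hBpos : 0 ≤ δ⁻¹ * (b:ℝ) ^ (-δ) * (j:ℝ) ^ (δ - 1) := by positivity
    calc ((Real.log j + 1) / j) ^ s
        ≤ ((L + 1) / j + δ⁻¹ * (b:ℝ) ^ (-δ) * (j:ℝ) ^ (δ - 1)) ^ s :=
          Real.rpow_le_rpow (by positivity) hAB hs0.le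
      _ ≤ 2 ^ s * (((L + 1) / j) ^ s + (δ⁻¹ * (b:ℝ) ^ (-δ) * (j:ℝ) ^ (δ - 1)) ^ s) :=
          add_rpow_le' hApos hBpos hs0.le
      _ = 2 ^ s * ((L + 1) ^ s * (j:ℝ) ^ (-s)) +
          2 ^ s * (δ⁻¹ ^ s * ((b:ℝ) ^ (-δ)) ^ s * (j:ℝ) ^ (-((1 - δ) * s))) := by
          have e1 : ((L + 1) / j) ^ s = (L + 1) ^ s * (j:ℝ) ^ (-s) := by
            rw [Real.div_rpow (by linarith) hj0.le, Real.rpow_neg hj0.le, div_eq_mul_inv]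
          have e2 : (δ⁻¹ * (b:ℝ) ^ (-δ) * (j:ℝ) ^ (δ - 1)) ^ s
              = δ⁻¹ ^ s * ((b:ℝ) ^ (-δ)) ^ s * (j:ℝ) ^ (-((1 - δ) * s)) := by
            rw [Real.mul_rpow (by positivity) (by positivity),
              Real.mul_rpow (by positivity) (by positivity),
              ← Real.rpow_mul hj0.le]
            congr 2
            ring
          rw [e1, e2]; ring
  -- sum it up
  have hb1 : 1 ≤ b := by omega
  have hsum1 := tail_rpow_sum_le hs b N hb1
  have hsum2 := tail_rpow_sum_le ha2gt b N hb1
  have hA : (0:ℝ) ≤ 2 ^ s * (L + 1) ^ s :=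
    mul_nonneg hpows.le (Real.rpow_nonneg (by linarith) _)
  have hB : (0:ℝ) ≤ 2 ^ s * (δ⁻¹ ^ s * ((b:ℝ) ^ (-δ)) ^ s) := by
    apply mul_nonneg hpows.le
    exact mul_nonneg hpowd.le (Real.rpow_nonneg (Real.rpow_nonneg hb0.le _) _)
  have hbig : ∑ j ∈ Finset.Icc (b+1) N, ((Real.log j + 1)/j) ^ s ≤
      2 ^ s * (L+1) ^ s * ((b:ℝ) ^ (1-s)/(s-1)) +
      2 ^ s * (δ⁻¹ ^ s * ((b:ℝ) ^ (-δ)) ^ s) *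
        ((b:ℝ) ^ (1-(1-δ)*s)/((1-δ)*s-1)) := by
    calc ∑ j ∈ Finset.Icc (b+1) N, ((Real.log j + 1)/j) ^ s
        ≤ ∑ j ∈ Finset.Icc (b+1) N,
            (2 ^ s * ((L + 1) ^ s * (j:ℝ) ^ (-s)) +
             2 ^ s * (δ⁻¹ ^ s * ((b:ℝ) ^ (-δ)) ^ s * (j:ℝ) ^ (-((1 - δ) * s)))) :=
          Finset.sum_le_sum hterm
      _ = 2 ^ s * (L+1) ^ s * (∑ j ∈ Finset.Icc (b+1) N, (j:ℝ) ^ (-s)) +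
          2 ^ s * (δ⁻¹ ^ s * ((b:ℝ) ^ (-δ)) ^ s) *
            (∑ j ∈ Finset.Icc (b+1) N, (j:ℝ) ^ (-((1-δ)*s))) := by
          rw [Finset.sum_add_distrib]
          congr 1
          · rw [Finset.mul_sum]; exact Finset.sum_congr rfl fun j _ => by ring
          · rw [Finset.mul_sum]; exact Finset.sum_congr rfl fun j _ => by ring
      _ ≤ _ :=
          add_le_add (mul_le_mul_of_nonneg_left hsum1 hA)
            (mul_le_mul_of_nonneg_left hsum2 hB)
  refine hbig.trans ?_
  have e3 : ((b:ℝ) ^ (-δ)) ^ s * (b:ℝ) ^ (1-(1-δ)*s) = (b:ℝ) ^ (1-s) := by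
    rw [← Real.rpow_mul hb0.le, ← Real.rpow_add hb0]
    congr 1; ring
  have hL1 : (L+1) ^ s ≤ c₁ ^ s * L ^ s := by
    rw [← Real.mul_rpow hc₁0.le hLb0.le]
    apply Real.rpow_le_rpow (by linarith) ?_ hs0.le
    have expand : c₁ * L = L + L / Real.log 2 := by rw [hc₁]; ring
    have h5 : (1:ℝ) ≤ L / Real.log 2 := (one_le_div hl2).mpr hLb
    rw [expand]; linarith
  have hone : (1:ℝ) ≤ (Real.log 2)⁻¹ ^ s * L ^ s := by
    rw [← Real.mul_rpow (inv_pos.mpr hl2).le hLb0.le]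
    calc (1:ℝ) = 1 ^ s := (Real.one_rpow s).symm
      _ ≤ ((Real.log 2)⁻¹ * L) ^ s := by
          apply Real.rpow_le_rpow zero_le_one ?_ hs0.le
          rw [← div_eq_inv_mul]
          exact (one_le_div hl2).mpr hLb
  have hb1s : (0:ℝ) ≤ (b:ℝ) ^ (1-s) := Real.rpow_nonneg hb0.le _
  have t1 : 2 ^ s * (L+1) ^ s * ((b:ℝ) ^ (1-s)/(s-1)) ≤
      2 ^ s * c₁ ^ s / (s-1) * (L ^ s * (b:ℝ) ^ (1-s)) := by
    have hfac : (0:ℝ) ≤ 2 ^ s / (s-1) * (b:ℝ) ^ (1-s) :=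
      mul_nonneg (div_nonneg hpows.le (by linarith)) hb1s
    calc 2 ^ s * (L+1) ^ s * ((b:ℝ) ^ (1-s)/(s-1))
        = (2 ^ s / (s-1) * (b:ℝ) ^ (1-s)) * (L+1) ^ s := by ring
      _ ≤ (2 ^ s / (s-1) * (b:ℝ) ^ (1-s)) * (c₁ ^ s * L ^ s) :=
          mul_le_mul_of_nonneg_left hL1 hfac
      _ = 2 ^ s * c₁ ^ s / (s-1) * (L ^ s * (b:ℝ) ^ (1-s)) := by ring
  have t2 : 2 ^ s * (δ⁻¹ ^ s * ((b:ℝ) ^ (-δ)) ^ s) * ((b:ℝ) ^ (1-(1-δ)*s)/((1-δ)*s-1)) ≤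
      2 ^ s * δ⁻¹ ^ s * (Real.log 2)⁻¹ ^ s / ((1-δ)*s - 1) * (L ^ s * (b:ℝ) ^ (1-s)) := by
    have hfac : (0:ℝ) ≤ 2 ^ s * δ⁻¹ ^ s / ((1-δ)*s-1) * (b:ℝ) ^ (1-s) :=
      mul_nonneg (div_nonneg (mul_nonneg hpows.le hpowd.le) (by linarith)) hb1s
    calc 2 ^ s * (δ⁻¹ ^ s * ((b:ℝ) ^ (-δ)) ^ s) * ((b:ℝ) ^ (1-(1-δ)*s)/((1-δ)*s-1))
        = (2 ^ s * δ⁻¹ ^ s / ((1-δ)*s-1)) * (((b:ℝ) ^ (-δ)) ^ s * (b:ℝ) ^ (1-(1-δ)*s)) := by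
          ring
      _ = (2 ^ s * δ⁻¹ ^ s / ((1-δ)*s-1) * (b:ℝ) ^ (1-s)) * 1 := by rw [e3]; ring
      _ ≤ (2 ^ s * δ⁻¹ ^ s / ((1-δ)*s-1) * (b:ℝ) ^ (1-s)) *
            ((Real.log 2)⁻¹ ^ s * L ^ s) := mul_le_mul_of_nonneg_left hone hfac
      _ = 2 ^ s * δ⁻¹ ^ s * (Real.log 2)⁻¹ ^ s / ((1-δ)*s - 1) * (L ^ s * (b:ℝ) ^ (1-s)) := by
          ring
  calc _ ≤ _ := add_le_add t1 t2
    _ = (2 ^ s * c₁ ^ s / (s - 1) + 2 ^ s * δ⁻¹ ^ s * (Real.log 2)⁻¹ ^ s / ((1 - δ) * s - 1)) *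
        (L ^ s * (b:ℝ) ^ (1 - s)) := by ring

/-- Key truncation-error estimate for the AR(b) approximation: under covariance decay
`|Cov(x_k, x_l)| ≤ C|k−l|^{−τ}` with `τ > 1.5`, `Var(x_k) ≤ C`, and coefficient decay
`|φ_j| ≤ C((log j + 1)/j)^{τ−1}`, we have
`E|∑_{j=b+1}^{i−1} φ_j x_{i−j}|² ≤ C'((log b)^{τ−1} b^{−(τ−1.5)})²`, with `C'`
depending only on `C` and `τ`. -/
theorem ar_truncation_error_bound (C τ : ℝ) (hC : 0 < C) (hτ : 1.5 < τ) :
    ∃ C' : ℝ, 0 < C' ∧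
      ∀ (Ω : Type) (_ : MeasurableSpace Ω) (μ : Measure Ω), IsProbabilityMeasure μ →
        ∀ (x : ℕ → Ω → ℝ) (φ : ℕ → ℝ) (b i : ℕ),
          2 ≤ b → b < i →
          (∀ k l, Integrable (fun ω => x k ω * x l ω) μ) →
          (∀ k, ∫ ω, x k ω ∂μ = 0) →
          (∀ k l : ℕ, k ≠ l →
            |∫ ω, x k ω * x l ω ∂μ| ≤ C * ((((k : ℤ) - (l : ℤ)).natAbs : ℝ)) ^ (-τ)) →
          (∀ k, ∫ ω, (x k ω) ^ 2 ∂μ ≤ C) →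
          (∀ j : ℕ, 1 ≤ j → |φ j| ≤ C * ((Real.log j + 1) / j) ^ (τ - 1)) →
          ∫ ω, (∑ j ∈ Finset.Icc (b + 1) (i - 1), φ j * x (i - j) ω) ^ 2 ∂μ ≤
            C' * ((Real.log b) ^ (τ - 1) * (b : ℝ) ^ (-(τ - 1.5))) ^ 2 := by
  have hτ1 : (1:ℝ) < τ := by nlinarith [hτ]
  have hZsum : Summable (fun m : ℤ => |(m:ℝ)| ^ (-τ)) := Real.summable_abs_int_rpow hτ1
  set Z : ℝ := ∑' m : ℤ, |(m:ℝ)| ^ (-τ) with hZ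
  have hZ0 : 0 ≤ Z := tsum_nonneg fun m => Real.rpow_nonneg (abs_nonneg _) _
  have hs : (1:ℝ) < 2 * (τ - 1) := by nlinarith [hτ]
  obtain ⟨K, hK0, hKs⟩ := coeff_tail_sum hs
  refine ⟨C ^ 3 * (1 + Z) * K, by positivity, ?_⟩
  intro Ω mΩ μ hμ x φ b i hb hbi hint hmean hcovbound hvar hφ
  set J : Finset ℕ := Finset.Icc (b + 1) (i - 1) with hJ
  set w : ℕ → ℕ → ℝ := fun j l => if j = l then 1 else |(j:ℝ) - (l:ℝ)| ^ (-τ) with hw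
  have hw0 : ∀ j l, 0 ≤ w j l := by
    intro j l
    rw [hw]
    dsimp only
    split
    · norm_num
    · exact Real.rpow_nonneg (abs_nonneg _) _
  have hwsymm : ∀ j l, w j l = w l j := by
    intro j l
    rw [hw]
    dsimp only
    rcases eq_or_ne j l with rfl | hne
    · simp
    · rw [if_neg hne, if_neg hne.symm, abs_sub_comm]
  -- Step 1: expand the square of the sum
  have expand : ∫ ω, (∑ j ∈ J, φ j * x (i - j) ω) ^ 2 ∂μ
      = ∑ j ∈ J, ∑ l ∈ J, (φ j * φ l) * ∫ ω, x (i - j) ω * x (i - l) ω ∂μ := by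
    have h1 : ∀ ω, (∑ j ∈ J, φ j * x (i - j) ω) ^ 2
        = ∑ j ∈ J, ∑ l ∈ J, (φ j * φ l) * (x (i - j) ω * x (i - l) ω) := by
      intro ω
      rw [sq, Finset.sum_mul_sum]
      exact Finset.sum_congr rfl fun j _ => Finset.sum_congr rfl fun l _ => by ring
    calc ∫ ω, (∑ j ∈ J, φ j * x (i - j) ω) ^ 2 ∂μ
        = ∫ ω, ∑ j ∈ J, ∑ l ∈ J, (φ j * φ l) * (x (i - j) ω * x (i - l) ω) ∂μ := by
          exact integral_congr_ae (Filter.Eventually.of_forall h1)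
      _ = ∑ j ∈ J, ∑ l ∈ J, (φ j * φ l) * ∫ ω, x (i - j) ω * x (i - l) ω ∂μ := by
          rw [integral_finset_sum _ fun j _ =>
            integrable_finset_sum _ fun l _ => (hint _ _).const_mul _]
          refine Finset.sum_congr rfl fun j _ => ?_
          rw [integral_finset_sum _ fun l _ => (hint _ _).const_mul _]
          exact Finset.sum_congr rfl fun l _ => integral_const_mul _ _
  -- Step 2: covariance bound per pair
  have covb : ∀ j ∈ J, ∀ l ∈ J,
      |∫ ω, x (i - j) ω * x (i - l) ω ∂μ| ≤ C * w j l := by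
    intro j hj l hl
    rcases eq_or_ne j l with rfl | hne
    · rw [hw]
      dsimp only
      rw [if_pos rfl, mul_one]
      have hsq : (fun ω => x (i - j) ω * x (i - j) ω) = fun ω => (x (i - j) ω) ^ 2 :=
        funext fun ω => (sq _).symm
      rw [hsq]
      have hnn : 0 ≤ ∫ ω, (x (i - j) ω) ^ 2 ∂μ := integral_nonneg fun ω => sq_nonneg _
      rw [abs_of_nonneg hnn]
      exact hvar _
    · rw [hJ, Finset.mem_Icc] at hj hl
      have hji : j < i := by omega
      have hli : l < i := by omega
      have hne' : i - j ≠ i - l := by omega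
      have h := hcovbound (i - j) (i - l) hne'
      rw [hw]
      dsimp only
      rw [if_neg hne]
      have hcast : ((((i - j : ℕ) : ℤ) - ((i - l : ℕ) : ℤ)).natAbs : ℝ) = |(j:ℝ) - (l:ℝ)| := by
        rw [Nat.cast_natAbs]
        push_cast [Nat.cast_sub hji.le, Nat.cast_sub hli.le]
        rw [show (i:ℝ) - j - ((i:ℝ) - l) = -((j:ℝ) - l) by ring, abs_neg]
      rw [hcast] at h
      exact h
  -- Step 3: per-pair product bound
  have pair : ∀ j ∈ J, ∀ l ∈ J,
      (φ j * φ l) * ∫ ω, x (i - j) ω * x (i - l) ω ∂μ ≤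
        C * ((φ j ^ 2 + φ l ^ 2) / 2) * w j l := by
    intro j hj l hl
    have h1 : (φ j * φ l) * ∫ ω, x (i - j) ω * x (i - l) ω ∂μ ≤
        |φ j| * |φ l| * |∫ ω, x (i - j) ω * x (i - l) ω ∂μ| := by
      rw [← abs_mul, ← abs_mul]
      exact le_abs_self _
    refine h1.trans ?_
    have h2 : |φ j| * |φ l| * |∫ ω, x (i - j) ω * x (i - l) ω ∂μ| ≤
        |φ j| * |φ l| * (C * w j l) :=
      mul_le_mul_of_nonneg_left (covb j hj l hl) (by positivity)
    refine h2.trans ?_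
    have h3 : |φ j| * |φ l| ≤ (φ j ^ 2 + φ l ^ 2) / 2 := by
      nlinarith [sq_nonneg (|φ j| - |φ l|), sq_abs (φ j), sq_abs (φ l)]
    calc |φ j| * |φ l| * (C * w j l) ≤ (φ j ^ 2 + φ l ^ 2) / 2 * (C * w j l) :=
          mul_le_mul_of_nonneg_right h3 (by positivity)
      _ = C * ((φ j ^ 2 + φ l ^ 2) / 2) * w j l := by ring
  -- Step 4: symmetrize
  have symmeq : ∑ j ∈ J, ∑ l ∈ J, C * ((φ j ^ 2 + φ l ^ 2) / 2) * w j l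
      = ∑ j ∈ J, ∑ l ∈ J, C * φ j ^ 2 * w j l := by
    have h1 : ∀ j l : ℕ, C * ((φ j ^ 2 + φ l ^ 2) / 2) * w j l
        = C * φ j ^ 2 * w j l / 2 + C * φ l ^ 2 * w j l / 2 := fun j l => by ring
    simp_rw [h1, Finset.sum_add_distrib]
    have h2 : ∑ j ∈ J, ∑ l ∈ J, C * φ l ^ 2 * w j l / 2
        = ∑ j ∈ J, ∑ l ∈ J, C * φ j ^ 2 * w j l / 2 := by
      rw [Finset.sum_comm]
      exact Finset.sum_congr rfl fun j _ => Finset.sum_congr rfl fun l _ => by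
        rw [hwsymm]
    rw [h2, ← Finset.sum_add_distrib]
    refine Finset.sum_congr rfl fun j _ => ?_
    rw [← Finset.sum_add_distrib]
    exact Finset.sum_congr rfl fun l _ => by ring
  -- Step 5: row sums of w
  have row : ∀ j : ℕ, ∑ l ∈ J, w j l ≤ 1 + Z := by
    intro j
    have h1 : ∀ l ∈ J, w j l ≤ (if l = j then (1:ℝ) else 0) + |(j:ℝ) - (l:ℝ)| ^ (-τ) := by
      intro l _
      rw [hw]
      dsimp only
      rcases eq_or_ne j l with rfl | hne
      · rw [if_pos rfl, if_pos rfl, sub_self, abs_zero,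
          Real.zero_rpow (by intro h0; nlinarith [hτ] : -τ ≠ 0)]
        norm_num
      · rw [if_neg hne, if_neg (Ne.symm hne), zero_add]
    calc ∑ l ∈ J, w j l
        ≤ ∑ l ∈ J, ((if l = j then (1:ℝ) else 0) + |(j:ℝ) - (l:ℝ)| ^ (-τ)) :=
          Finset.sum_le_sum h1
      _ = (∑ l ∈ J, if l = j then (1:ℝ) else 0) + ∑ l ∈ J, |(j:ℝ) - (l:ℝ)| ^ (-τ) :=
          Finset.sum_add_distrib
      _ ≤ 1 + Z := by
          refine add_le_add ?_ ?_
          · rw [Finset.sum_ite_eq' J j fun _ => (1:ℝ)]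
            split <;> norm_num
          · have himg : ∑ l ∈ J, |(j:ℝ) - (l:ℝ)| ^ (-τ)
                = ∑ m ∈ J.image (fun l : ℕ => (j:ℤ) - l), |(m:ℝ)| ^ (-τ) := by
              rw [Finset.sum_image (by intro u _ v _ h; simp only at h; omega)]
              refine Finset.sum_congr rfl fun l _ => ?_
              congr 1
              push_cast
              ring_nf
            rw [himg, hZ]
            exact Summable.sum_le_tsum _ (fun m _ => Real.rpow_nonneg (abs_nonneg _) _) hZsum
  -- Step 6: coefficient bound
  have hφsq : ∀ j ∈ J, φ j ^ 2 ≤ C ^ 2 * ((Real.log j + 1) / j) ^ (2 * (τ - 1)) := by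
    intro j hj
    rw [hJ, Finset.mem_Icc] at hj
    have hj1 : 1 ≤ j := by omega
    have hφj := hφ j hj1
    have hj0 : (0:ℝ) < j := by exact_mod_cast (by omega : 0 < j)
    have hxpos : 0 < (Real.log j + 1) / j := by
      apply div_pos ?_ hj0
      have : 0 ≤ Real.log j := Real.log_nonneg (by exact_mod_cast hj1)
      linarith
    have hu : ((Real.log j + 1) / j) ^ (τ - 1) * ((Real.log j + 1) / j) ^ (τ - 1)
        = ((Real.log j + 1) / j) ^ (2 * (τ - 1)) := by
      rw [← Real.rpow_add hxpos]; congr 1; ring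
    calc φ j ^ 2 = |φ j| ^ 2 := (sq_abs _).symm
      _ ≤ (C * ((Real.log j + 1) / j) ^ (τ - 1)) ^ 2 := by
          exact pow_le_pow_left₀ (abs_nonneg _) hφj 2
      _ = C ^ 2 * (((Real.log j + 1) / j) ^ (τ - 1) * ((Real.log j + 1) / j) ^ (τ - 1)) := by
          ring
      _ = C ^ 2 * ((Real.log j + 1) / j) ^ (2 * (τ - 1)) := by rw [hu]
  -- Step 7: put it together
  have hLb0 : 0 < Real.log b := Real.log_pos (by exact_mod_cast (by omega : 1 < b))
  have main : ∫ ω, (∑ j ∈ J, φ j * x (i - j) ω) ^ 2 ∂μ ≤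
      C * (1 + Z) * (C ^ 2 * (K * ((Real.log b) ^ (2 * (τ - 1)) * (b:ℝ) ^ (1 - 2 * (τ - 1))))) := by
    rw [expand]
    calc ∑ j ∈ J, ∑ l ∈ J, (φ j * φ l) * ∫ ω, x (i - j) ω * x (i - l) ω ∂μ
        ≤ ∑ j ∈ J, ∑ l ∈ J, C * ((φ j ^ 2 + φ l ^ 2) / 2) * w j l :=
          Finset.sum_le_sum fun j hj => Finset.sum_le_sum fun l hl => pair j hj l hl
      _ = ∑ j ∈ J, ∑ l ∈ J, C * φ j ^ 2 * w j l := symmeq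
      _ = ∑ j ∈ J, C * φ j ^ 2 * ∑ l ∈ J, w j l := by
          exact Finset.sum_congr rfl fun j _ => by rw [Finset.mul_sum]
      _ ≤ ∑ j ∈ J, C * φ j ^ 2 * (1 + Z) := by
          refine Finset.sum_le_sum fun j _ => ?_
          exact mul_le_mul_of_nonneg_left (row j) (by positivity)
      _ = C * (1 + Z) * ∑ j ∈ J, φ j ^ 2 := by
          rw [Finset.mul_sum]
          exact Finset.sum_congr rfl fun j _ => by ring
      _ ≤ C * (1 + Z) * (C ^ 2 * (K * ((Real.log b) ^ (2 * (τ - 1)) * (b:ℝ) ^ (1 - 2 * (τ - 1))))) := by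
          refine mul_le_mul_of_nonneg_left ?_ (by positivity)
          calc ∑ j ∈ J, φ j ^ 2
              ≤ ∑ j ∈ J, C ^ 2 * ((Real.log j + 1) / j) ^ (2 * (τ - 1)) :=
                Finset.sum_le_sum hφsq
            _ = C ^ 2 * ∑ j ∈ J, ((Real.log j + 1) / j) ^ (2 * (τ - 1)) :=
                (Finset.mul_sum _ _ _).symm
            _ ≤ C ^ 2 * (K * ((Real.log b) ^ (2 * (τ - 1)) * (b:ℝ) ^ (1 - 2 * (τ - 1)))) :=
                mul_le_mul_of_nonneg_left (hKs b (i - 1) hb) (by positivity)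
  refine main.trans ?_
  have hrhs : ((Real.log b) ^ (τ - 1) * (b:ℝ) ^ (-(τ - 1.5))) ^ 2
      = (Real.log b) ^ (2 * (τ - 1)) * (b:ℝ) ^ (1 - 2 * (τ - 1)) := by
    have hb0 : (0:ℝ) < b := by positivity
    rw [mul_pow]
    congr 1
    · rw [← Real.rpow_natCast ((Real.log b) ^ (τ - 1)) 2, ← Real.rpow_mul hLb0.le]
      congr 1
      push_cast
      ring
    · rw [← Real.rpow_natCast ((b:ℝ) ^ (-(τ - 1.5))) 2, ← Real.rpow_mul hb0.le]
      congr 1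
      push_cast
      norm_num
      ring
  rw [hrhs]
  have heq : C ^ 3 * (1 + Z) * K * ((Real.log b) ^ (2 * (τ - 1)) * (b:ℝ) ^ (1 - 2 * (τ - 1)))
      = C * (1 + Z) * (C ^ 2 * (K * ((Real.log b) ^ (2 * (τ - 1)) * (b:ℝ) ^ (1 - 2 * (τ - 1))))) := by
    ring
  rw [heq]
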